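/- There is an absolute constant C > 0 such that for all integers d, k, m ≥ 1 the following holds. Consider the range space whose ground set is the set of m-tuples of points of Euclidean space ℝ^d (viewed as point sequences), and whose ranges are all metric balls under the discrete Fréchet distance with centers of complexity k, i.e. all sets { s : Fin m → ℝ^d | d_dF(q, s) ≤ r } over all tuples q : Fin k → ℝ^d and radii r > 0. Then every finite subset of the ground set that is shattered by this family of ranges has cardinality at most C · d · k · (1 + log(d·k·m)). In particular the VC dimension of this range space is O(d·k·log(d·k·m)). -/

import Mathlib

/-- A finite set `Y` is shattered by the family of ranges `R` if every subset of `Y`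
can be realized as the intersection of `Y` with some range in `R`. -/
def Shatters {X : Type*} (R : Set (Set X)) (Y : Finset X) : Prop :=
  ∀ A ⊆ Y, ∃ B ∈ R, ∀ y ∈ Y, y ∈ B ↔ y ∈ A

/-- One step of a traversal: each index advances by 0 or 1, and at least one advances. -/
def TravStep {k m : ℕ} (a b : Fin k × Fin m) : Prop :=
  ((b.1 : ℕ) = (a.1 : ℕ) ∨ (b.1 : ℕ) = (a.1 : ℕ) + 1) ∧
  ((b.2 : ℕ) = (a.2 : ℕ) ∨ (b.2 : ℕ) = (a.2 : ℕ) + 1) ∧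
  (a.1 : ℕ) + (a.2 : ℕ) < (b.1 : ℕ) + (b.2 : ℕ)

/-- A traversal of the index grid `{1,…,k} × {1,…,m}` (written 0-indexed): it starts at the
pair of first indices, ends at the pair of last indices, and each consecutive pair of
entries is a valid traversal step. -/
def IsTraversal {k m : ℕ} (T : List (Fin k × Fin m)) : Prop :=
  (∃ a ∈ T.head?, (a.1 : ℕ) = 0 ∧ (a.2 : ℕ) = 0) ∧
  (∃ b ∈ T.getLast?, (b.1 : ℕ) = k - 1 ∧ (b.2 : ℕ) = m - 1) ∧
  T.Chain' TravStep

/-- The discrete Fréchet distance: the minimum over all traversals of the maximum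
distance between paired points. -/
noncomputable def discreteFrechetDist {d k m : ℕ}
    (q : Fin k → EuclideanSpace ℝ (Fin d)) (s : Fin m → EuclideanSpace ℝ (Fin d)) : ℝ :=
  sInf {x | ∃ T : List (Fin k × Fin m), IsTraversal T ∧
    x = (T.map fun p => dist (q p.1) (s p.2)).foldr max 0}

/-! ### Auxiliary lemmas about `foldr max` -/

lemma foldr_max_nonneg (l : List ℝ) : 0 ≤ l.foldr max 0 := by
  induction l with
  | nil => simp
  | cons a l ih => simpa using Or.inr ih

lemma foldr_max_le_iff (l : List ℝ) (r : ℝ) (hr : 0 ≤ r) :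
    l.foldr max 0 ≤ r ↔ ∀ x ∈ l, x ≤ r := by
  induction l with
  | nil => simpa using hr
  | cons a l ih => simp [max_le_iff, ih]

lemma foldr_max_map_eq_fold {α : Type*} [DecidableEq α] (f : α → ℝ) (T : List α) :
    (T.map f).foldr max 0 = T.toFinset.fold max 0 f := by
  induction T with
  | nil => simp
  | cons a T ih => simp [Finset.fold_insert_idem, ih]

/-! ### Existence of traversals -/

lemma exists_trav_to {k m : ℕ} (hk : 0 < k) (hm : 0 < m) (i : Fin k) (j : Fin m) :
    ∃ T : List (Fin k × Fin m),
      T.head? = some (⟨0, hk⟩, ⟨0, hm⟩) ∧ T.getLast? = some (i, j) ∧ T.Chain' TravStep := by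
  suffices h : ∀ n (i : Fin k) (j : Fin m), (i : ℕ) + (j : ℕ) = n →
      ∃ T : List (Fin k × Fin m),
      T.head? = some (⟨0, hk⟩, ⟨0, hm⟩) ∧ T.getLast? = some (i, j) ∧ T.Chain' TravStep from
    h _ i j rfl
  intro n
  induction n using Nat.strong_induction_on with
  | _ n IH =>
  intro i j hn
  rcases Nat.eq_zero_or_pos n with h0 | hpos
  · subst h0
    have hi : (i : ℕ) = 0 := by omega
    have hj : (j : ℕ) = 0 := by omega
    have : i = ⟨0, hk⟩ := Fin.ext hi
    have : j = ⟨0, hm⟩ := Fin.ext hj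
    subst this; subst ‹i = _›
    exact ⟨[(⟨0, hk⟩, ⟨0, hm⟩)], rfl, rfl, List.isChain_singleton _⟩
  · rcases Nat.eq_zero_or_pos (i : ℕ) with hi | hi
    · have hj : 0 < (j : ℕ) := by omega
      obtain ⟨T, h1, h2, h3⟩ := IH (n-1) (by omega) i ⟨(j : ℕ) - 1, by omega⟩ (by simp; omega)
      refine ⟨T ++ [(i, j)], ?_, ?_, ?_⟩
      · rcases T with _ | ⟨a, T⟩ <;> simp_all
      · simp
      · rw [List.Chain', List.isChain_append]
        refine ⟨h3, List.isChain_singleton _, ?_⟩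
        intro x hx y hy
        simp at hy
        rw [h2] at hx; simp at hx
        subst hx; subst hy
        refine ⟨Or.inl rfl, Or.inr (by simp; omega), by simp; omega⟩
    · obtain ⟨T, h1, h2, h3⟩ := IH (n-1) (by omega) ⟨(i : ℕ) - 1, by omega⟩ j (by simp; omega)
      refine ⟨T ++ [(i, j)], ?_, ?_, ?_⟩
      · rcases T with _ | ⟨a, T⟩ <;> simp_all
      · simp
      · rw [List.Chain', List.isChain_append]
        refine ⟨h3, List.isChain_singleton _, ?_⟩
        intro x hx y hy
        simp at hy
        rw [h2] at hx; simp at hx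
        subst hx; subst hy
        exact ⟨Or.inr (by simp; omega), Or.inl rfl, by simp; omega⟩

lemma exists_traversal {k m : ℕ} (hk : 0 < k) (hm : 0 < m) :
    ∃ T : List (Fin k × Fin m), IsTraversal T := by
  obtain ⟨T, h1, h2, h3⟩ := exists_trav_to hk hm ⟨k-1, by omega⟩ ⟨m-1, by omega⟩
  exact ⟨T, ⟨⟨_, by rw [h1]; exact rfl, rfl, rfl⟩, ⟨_, by rw [h2]; exact rfl, rfl, rfl⟩, h3⟩⟩

/-! ### Characterization of small Fréchet distance -/

lemma discreteFrechetDist_le_iff {d k m : ℕ} (hk : 0 < k) (hm : 0 < m)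
    (q : Fin k → EuclideanSpace ℝ (Fin d)) (s : Fin m → EuclideanSpace ℝ (Fin d))
    (r : ℝ) (hr : 0 ≤ r) :
    discreteFrechetDist q s ≤ r ↔
      ∃ T : List (Fin k × Fin m), IsTraversal T ∧ ∀ p ∈ T, dist (q p.1) (s p.2) ≤ r := by
  classical
  set S := {x | ∃ T : List (Fin k × Fin m), IsTraversal T ∧
    x = (T.map fun p => dist (q p.1) (s p.2)).foldr max 0} with hS
  have hfin : S.Finite := by
    apply Set.Finite.subset (Set.finite_range
      (fun A : Finset (Fin k × Fin m) => A.fold max 0 (fun p => dist (q p.1) (s p.2))))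
    rintro x ⟨T, -, rfl⟩
    exact ⟨T.toFinset, (foldr_max_map_eq_fold _ T).symm⟩
  have hne : S.Nonempty := by
    obtain ⟨T, hT⟩ := exists_traversal hk hm
    exact ⟨_, T, hT, rfl⟩
  constructor
  · intro h
    obtain ⟨T, hT, hval⟩ := hne.csInf_mem hfin
    refine ⟨T, hT, ?_⟩
    have : (T.map fun p => dist (q p.1) (s p.2)).foldr max 0 ≤ r := by
      rw [← hval]; exact h
    intro p hp
    exact (foldr_max_le_iff _ r hr).1 this _ (List.mem_map_of_mem hp)
  · rintro ⟨T, hT, hle⟩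
    have hbdd : BddBelow S := ⟨0, by rintro x ⟨T', -, rfl⟩; exact foldr_max_nonneg _⟩
    refine csInf_le hbdd ⟨T, hT, rfl⟩ |>.trans ?_
    rw [foldr_max_le_iff _ r hr]
    rintro x hx
    simp only [List.mem_map] at hx
    obtain ⟨p, hp, rfl⟩ := hx
    exact hle p hp

/-! ### Binomial sums -/

lemma sum_choose_le_pow (N v : ℕ) : ∑ i ∈ Finset.Iic v, N.choose i ≤ (N + 1) ^ v := by
  induction v with
  | zero => rw [show Finset.Iic 0 = {0} by rfl]; simp
  | succ v ih =>
    have key : ∀ i, N.choose (i + 1) ≤ N * N.choose i := by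
      intro i
      calc N.choose (i+1) ≤ N.choose (i+1) * (i+1) := Nat.le_mul_of_pos_right _ (by omega)
        _ = N.choose i * (N - i) := Nat.choose_succ_right_eq N i
        _ ≤ N * N.choose i := by
            rw [Nat.mul_comm]; exact Nat.mul_le_mul_right _ (Nat.sub_le _ _)
    have h1 : ∑ i ∈ Finset.Iic (v + 1), N.choose i
        = ∑ i ∈ Finset.Iic v, N.choose (i + 1) + 1 := by
      have e : ∀ w : ℕ, Finset.Iic w = Finset.range (w + 1) := by
        intro w; ext x; simp [Nat.lt_succ_iff]
      rw [e, e, Finset.sum_range_succ' _ (v+1)]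
      simp [Nat.add_comm]
    calc ∑ i ∈ Finset.Iic (v + 1), N.choose i
        = ∑ i ∈ Finset.Iic v, N.choose (i + 1) + 1 := h1
      _ ≤ N * ∑ i ∈ Finset.Iic v, N.choose i + 1 := by
          rw [Finset.mul_sum]
          exact Nat.add_le_add_right (Finset.sum_le_sum fun i _ => key i) 1
      _ ≤ N * (N + 1) ^ v + 1 := by
          exact Nat.add_le_add_right (Nat.mul_le_mul_left _ ih) 1
      _ ≤ (N + 1) ^ (v + 1) := by
          rw [pow_succ, Nat.mul_comm ((N+1)^v) (N+1)]
          have : 1 ≤ (N+1)^v := Nat.one_le_pow _ _ (by omega)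
          nlinarith

/-! ### VC dimension of linear classifiers -/

open Finset in
lemma halfspace_vc {ι α : Type*} [Fintype ι] [DecidableEq α] (V : α → ι → ℝ) (s : Finset α)
    (hs : ∀ A ⊆ s, ∃ w : ι → ℝ, ∀ x ∈ s, ((∑ i, w i * V x i) ≤ 0 ↔ x ∈ A)) :
    s.card ≤ Fintype.card ι := by
  by_contra hlt
  push_neg at hlt
  have hinj : Set.InjOn V s := by
    intro x hx y hy hxy
    by_contra hne
    obtain ⟨w, hw⟩ := hs {x} (by simpa using hx)
    have h1 := (hw x hx).2 (by simp)
    have h2 := (not_congr (hw y hy)).2 (by simp [Ne.symm hne] : ¬ y ∈ ({x} : Finset α))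
    rw [hxy] at h1
    exact (h2 h1).elim
  classical
  set t : Finset (ι → ℝ) := s.image V with ht
  have hcard : Fintype.card ι < t.card := by
    rwa [ht, Finset.card_image_of_injOn hinj]
  have hrank : Module.finrank ℝ (ι → ℝ) < t.card := by
    rwa [Module.finrank_pi]
  obtain ⟨f, hsum, e₀, he₀t, he₀⟩ := Module.exists_nontrivial_relation_of_finrank_lt_card hrank
  have dotsum : ∀ w : ι → ℝ, ∑ e ∈ t, f e * (∑ i, w i * e i) = 0 := by
    intro w
    calc ∑ e ∈ t, f e * (∑ i, w i * e i)
        = ∑ e ∈ t, ∑ i, w i * (f e * e i) := by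
          refine Finset.sum_congr rfl fun e _ => ?_
          rw [Finset.mul_sum]
          exact Finset.sum_congr rfl fun i _ => by ring
      _ = ∑ i, ∑ e ∈ t, w i * (f e * e i) := Finset.sum_comm
      _ = ∑ i, w i * ((∑ e ∈ t, f e • e) i) := by
          refine Finset.sum_congr rfl fun i _ => ?_
          rw [Finset.sum_apply, Finset.mul_sum]
          exact Finset.sum_congr rfl fun e _ => by simp
      _ = 0 := by rw [hsum]; simp
  by_cases hP : ∃ e ∈ t, 0 < f e
  · obtain ⟨w, hw⟩ := hs (s.filter (fun x => f (V x) < 0)) (Finset.filter_subset _ _)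
    have : (0:ℝ) < ∑ e ∈ t, f e * (∑ i, w i * e i) := by
      apply Finset.sum_pos'
      · intro e het
        obtain ⟨x, hx, rfl⟩ := Finset.mem_image.1 het
        rcases lt_trichotomy (f (V x)) 0 with h | h | h
        · have hxA : x ∈ s.filter (fun x => f (V x) < 0) := Finset.mem_filter.2 ⟨hx, h⟩
          have := (hw x hx).2 hxA
          nlinarith
        · simp [h]
        · have hxA : x ∉ s.filter (fun x => f (V x) < 0) := by
            simp [Finset.mem_filter, hx, not_lt.2 h.le]
          have := (not_congr (hw x hx)).2 hxA
          push_neg at this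
          have hpos : 0 < ∑ i, w i * V x i := this
          positivity
      · obtain ⟨e, het, hfe⟩ := hP
        obtain ⟨x, hx, rfl⟩ := Finset.mem_image.1 het
        refine ⟨V x, het, ?_⟩
        have hxA : x ∉ s.filter (fun x => f (V x) < 0) := by
          simp [Finset.mem_filter, hx, not_lt.2 hfe.le]
        have := (not_congr (hw x hx)).2 hxA
        push_neg at this
        exact mul_pos hfe this
    rw [dotsum w] at this
    exact lt_irrefl _ this
  · push_neg at hP
    obtain ⟨w, hw⟩ := hs ∅ (Finset.empty_subset _)
    have : (0:ℝ) < ∑ e ∈ t, -(f e * (∑ i, w i * e i)) := by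
      apply Finset.sum_pos'
      · intro e het
        obtain ⟨x, hx, rfl⟩ := Finset.mem_image.1 het
        have hxA := (not_congr (hw x hx)).2 (by simp : ¬ x ∈ (∅ : Finset α))
        push_neg at hxA
        have hpos : 0 < ∑ i, w i * V x i := hxA
        have := hP _ het
        nlinarith
      · have hne : f e₀ < 0 := lt_of_le_of_ne (hP _ he₀t) he₀
        obtain ⟨x, hx, rfl⟩ := Finset.mem_image.1 he₀t
        refine ⟨V x, he₀t, ?_⟩
        have hxA := (not_congr (hw x hx)).2 (by simp : ¬ x ∈ (∅ : Finset α))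
        push_neg at hxA
        nlinarith [hxA]
    rw [Finset.sum_neg_distrib, dotsum w] at this
    simp at this

/-! ### The linearization of the atomic distance predicates -/

section Linearize

variable {d k m : ℕ} {Y : Finset (Fin m → EuclideanSpace ℝ (Fin d))}

/-- coefficient vector of the atom `dist (q i) (s j) ≤ r`, as a linear functional in the
lifted parameter vector. -/
noncomputable def Vvec (Y : Finset (Fin m → EuclideanSpace ℝ (Fin d)))
    (x : (Fin k × Fin m) × {s // s ∈ Y}) : ((Fin k × Fin d) ⊕ (Fin k ⊕ Fin 2)) → ℝ :=
  fun e => match e with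
  | Sum.inl (i', c) => if i' = x.1.1 then -2 * (x.2.1 x.1.2 c) else 0
  | Sum.inr (Sum.inl i') => if i' = x.1.1 then 1 else 0
  | Sum.inr (Sum.inr j) => if j = 0 then -1 else ∑ c, (x.2.1 x.1.2 c)^2

/-- the lifted parameter vector of the ball `(q, r)`. -/
noncomputable def wvec (q : Fin k → EuclideanSpace ℝ (Fin d)) (r : ℝ) :
    ((Fin k × Fin d) ⊕ (Fin k ⊕ Fin 2)) → ℝ :=
  fun e => match e with
  | Sum.inl (i, c) => q i c
  | Sum.inr (Sum.inl i) => ∑ c, (q i c)^2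
  | Sum.inr (Sum.inr j) => if j = 0 then r^2 else 1

lemma dot_eq (q : Fin k → EuclideanSpace ℝ (Fin d)) (r : ℝ)
    (x : (Fin k × Fin m) × {s // s ∈ Y}) :
    (∑ e, wvec q r e * Vvec Y x e)
      = dist (q x.1.1) (x.2.1 x.1.2) ^ 2 - r ^ 2 := by
  classical
  set a := x.1.1
  set u : EuclideanSpace ℝ (Fin d) := x.2.1 x.1.2 with hu
  have hdist : dist (q a) u ^ 2 = ∑ c, (q a c - u c) ^ 2 := by
    rw [EuclideanSpace.dist_eq, Real.sq_sqrt (Finset.sum_nonneg fun c _ => sq_nonneg _)]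
    exact Finset.sum_congr rfl fun c _ => by rw [Real.dist_eq, sq_abs]
  rw [Fintype.sum_sum_type, Fintype.sum_sum_type, Fintype.sum_prod_type]
  have h1 : ∑ i', ∑ c, wvec q r (Sum.inl (i', c)) * Vvec Y x (Sum.inl (i', c))
      = ∑ c, q a c * (-2 * u c) := by
    simp only [wvec, Vvec, mul_ite, mul_zero, ← hu]
    rw [Finset.sum_comm]
    simp [Finset.sum_ite_eq']
    rfl
  have h2 : ∑ i', wvec q r (Sum.inr (Sum.inl i')) * Vvec Y x (Sum.inr (Sum.inl i'))
      = ∑ c, (q a c)^2 := by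
    simp only [wvec, Vvec, mul_ite, mul_one, mul_zero]
    simp [Finset.sum_ite_eq']
    rfl
  have h3 : ∑ j : Fin 2, wvec q r (Sum.inr (Sum.inr j)) * Vvec Y x (Sum.inr (Sum.inr j))
      = -(r^2) + ∑ c, (u c)^2 := by
    rw [Fin.sum_univ_two]
    simp [wvec, Vvec, ← hu]
  rw [h1, h2, h3, hdist]
  have e1 : ∑ c, (q a c - u c) ^ 2
      = ∑ c, ((q a c)^2 + (q a c * (-2 * u c)) + (u c)^2) :=
    Finset.sum_congr rfl fun c _ => by ring
  rw [e1, Finset.sum_add_distrib, Finset.sum_add_distrib]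
  ring

lemma atom_iff (q : Fin k → EuclideanSpace ℝ (Fin d)) {r : ℝ} (hr : 0 < r)
    (x : (Fin k × Fin m) × {s // s ∈ Y}) :
    (∑ e, wvec q r e * Vvec Y x e) ≤ 0 ↔ dist (q x.1.1) (x.2.1 x.1.2) ≤ r := by
  rw [dot_eq, sub_nonpos]
  exact pow_le_pow_iff_left₀ dist_nonneg hr.le two_ne_zero

/-- The pattern (as a finset of atoms) determined by a ball `(q, r)`. -/
noncomputable def Pat (Y : Finset (Fin m → EuclideanSpace ℝ (Fin d)))
    (q : Fin k → EuclideanSpace ℝ (Fin d)) (r : ℝ) :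
    Finset ((Fin k × Fin m) × {s // s ∈ Y}) :=
  (Set.toFinite {x : (Fin k × Fin m) × {s // s ∈ Y} |
    dist (q x.1.1) (x.2.1 x.1.2) ≤ r}).toFinset

lemma mem_Pat (q : Fin k → EuclideanSpace ℝ (Fin d)) (r : ℝ)
    (x : (Fin k × Fin m) × {s // s ∈ Y}) :
    x ∈ Pat Y q r ↔ dist (q x.1.1) (x.2.1 x.1.2) ≤ r := by
  simp [Pat, Set.Finite.mem_toFinset]

/-- The family of all patterns. -/
noncomputable def PatFamily (Y : Finset (Fin m → EuclideanSpace ℝ (Fin d))) (k : ℕ) :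
    Finset (Finset ((Fin k × Fin m) × {s // s ∈ Y})) :=
  (Set.toFinite {P : Finset ((Fin k × Fin m) × {s // s ∈ Y}) |
    ∃ q r, 0 < r ∧ P = Pat Y q r}).toFinset

lemma mem_PatFamily (Y : Finset (Fin m → EuclideanSpace ℝ (Fin d)))
    (P : Finset ((Fin k × Fin m) × {s // s ∈ Y})) :
    P ∈ PatFamily Y k ↔ ∃ q r, 0 < r ∧ P = Pat Y q r := by
  simp [PatFamily, Set.Finite.mem_toFinset]

end Linearize

/-! ### The counting argument -/

set_option maxHeartbeats 2000000 in
theorem count_bound (d k m : ℕ) (hd : 1 ≤ d) (hk : 1 ≤ k) (hm : 1 ≤ m)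
    (Y : Finset (Fin m → EuclideanSpace ℝ (Fin d)))
    (hY : Shatters {B | ∃ (q : Fin k → EuclideanSpace ℝ (Fin d)) (r : ℝ), 0 < r ∧
            B = {s | discreteFrechetDist q s ≤ r}} Y) :
    2 ^ Y.card ≤ (k * m * Y.card + 1) ^ (k * d + k + 2) := by
  classical
  set ι := (Fin k × Fin m) × {s // s ∈ Y} with hι
  set 𝒜 : Finset (Finset ι) := PatFamily Y k with h𝒜
  have mem𝒜 : ∀ P : Finset ι, P ∈ 𝒜 ↔ ∃ q r, 0 < r ∧ P = Pat Y q r :=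
    fun P => mem_PatFamily Y P
  -- Step 1: injection from the powerset of Y into patterns
  have main : ∀ A ∈ Y.powerset, ∃ P ∈ 𝒜, ∀ y (hy : y ∈ Y),
      (y ∈ A ↔ ∃ T : List (Fin k × Fin m), IsTraversal T ∧
        ∀ p ∈ T, ((p, ⟨y, hy⟩) : ι) ∈ P) := by
    intro A hA
    obtain ⟨B, hB, htrace⟩ := hY A (Finset.mem_powerset.1 hA)
    obtain ⟨q, r, hr, rfl⟩ := hB
    refine ⟨Pat Y q r, (mem𝒜 _).2 ⟨q, r, hr, rfl⟩, ?_⟩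
    intro y hy
    rw [← htrace y hy]
    have : y ∈ {s | discreteFrechetDist q s ≤ r} ↔ discreteFrechetDist q y ≤ r := Iff.rfl
    rw [this, discreteFrechetDist_le_iff hk hm q y r hr.le]
    constructor
    · rintro ⟨T, hT, hle⟩
      refine ⟨T, hT, fun p hp => ?_⟩
      rw [mem_Pat]
      exact hle p hp
    · rintro ⟨T, hT, hle⟩
      refine ⟨T, hT, fun p hp => ?_⟩
      have := hle p hp
      rw [mem_Pat] at this
      exact this
  have step1 : 2 ^ Y.card ≤ 𝒜.card := by
    rw [← Finset.card_powerset]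
    set F : Finset (Fin m → EuclideanSpace ℝ (Fin d)) → Finset ι :=
      fun A => if h : A ∈ Y.powerset then (main A h).choose else ∅ with hF
    apply Finset.card_le_card_of_injOn F
    · intro A hA
      have hA : A ∈ Y.powerset := hA
      rw [hF]; simp only [dif_pos hA]
      exact (main A hA).choose_spec.1
    · intro A₁ h₁ A₂ h₂ heq
      simp only [Finset.coe_powerset, Set.mem_preimage, Set.mem_powerset_iff,
        Finset.coe_subset] at h₁ h₂
      have h₁' : A₁ ∈ Y.powerset := Finset.mem_powerset.2 h₁
      have h₂' : A₂ ∈ Y.powerset := Finset.mem_powerset.2 h₂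
      rw [hF] at heq; simp only [dif_pos h₁', dif_pos h₂'] at heq
      have s₁ := (main A₁ h₁').choose_spec.2
      have s₂ := (main A₂ h₂').choose_spec.2
      ext y
      by_cases hy : y ∈ Y
      · rw [s₁ y hy, s₂ y hy, heq]
      · constructor
        · intro h; exact absurd (h₁ h) hy
        · intro h; exact absurd (h₂ h) hy
  -- Step 2: VC dimension of 𝒜 is small
  have step2 : 𝒜.vcDim ≤ k * d + k + 2 := by
    apply Finset.sup_le
    intro s hs
    rw [Finset.mem_shatterer] at hs
    have := halfspace_vc (Vvec Y) s ?_
    · calc s.card ≤ Fintype.card ((Fin k × Fin d) ⊕ (Fin k ⊕ Fin 2)) := this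
        _ = k * d + (k + 2) := by simp
        _ = k * d + k + 2 := by omega
    · intro A hA
      obtain ⟨u, hu𝒜, hsu⟩ := hs hA
      obtain ⟨q, r, hr, rfl⟩ := (mem𝒜 _).1 hu𝒜
      refine ⟨wvec q r, fun x hx => ?_⟩
      rw [atom_iff q hr x, ← mem_Pat q r x]
      constructor
      · intro h
        rw [← hsu]
        exact Finset.mem_inter.2 ⟨hx, h⟩
      · intro h
        rw [← hsu] at h
        exact (Finset.mem_inter.1 h).2
  -- Step 3: Sauer–Shelah
  have hcardι : Fintype.card ι = k * m * Y.card := by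
    show Fintype.card ((Fin k × Fin m) × {s // s ∈ Y}) = k * m * Y.card
    simp [Fintype.card_coe, Nat.mul_assoc]
  calc (2 : ℕ) ^ Y.card ≤ 𝒜.card := step1
    _ ≤ 𝒜.shatterer.card := Finset.card_le_card_shatterer 𝒜
    _ ≤ ∑ i ∈ Finset.Iic 𝒜.vcDim, (Fintype.card ι).choose i :=
        Finset.card_shatterer_le_sum_vcDim
    _ ≤ ∑ i ∈ Finset.Iic (k * d + k + 2), (Fintype.card ι).choose i :=
        Finset.sum_le_sum_of_subset (Finset.Iic_subset_Iic.2 step2)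
    _ ≤ (Fintype.card ι + 1) ^ (k * d + k + 2) := sum_choose_le_pow _ _
    _ = (k * m * Y.card + 1) ^ (k * d + k + 2) := by rw [hcardι]

/-! ### Final arithmetic -/

lemma one_le_mul_real {a b : ℝ} (ha : 1 ≤ a) (hb : 1 ≤ b) : 1 ≤ a * b := by nlinarith

lemma final_arith (d k m n : ℕ) (hd : 1 ≤ d) (hk : 1 ≤ k) (hm : 1 ≤ m)
    (h : (2:ℕ) ^ n ≤ (k * m * n + 1) ^ (k * d + k + 2)) :
    (n : ℝ) ≤ 1000 * d * k * (1 + Real.log ((d : ℝ) * k * m)) := by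
  have hd' : (1:ℝ) ≤ d := by exact_mod_cast hd
  have hk' : (1:ℝ) ≤ k := by exact_mod_cast hk
  have hm' : (1:ℝ) ≤ m := by exact_mod_cast hm
  have hdk1 : (1:ℝ) ≤ (d:ℝ) * k := one_le_mul_real hd' hk'
  have hdkm1 : (1:ℝ) ≤ (d:ℝ) * k * m := one_le_mul_real hdk1 hm'
  obtain ⟨G, hG⟩ : ∃ G : ℝ, G = Real.log ((d : ℝ) * k * m) := ⟨_, rfl⟩
  rw [← hG]
  have hG0 : 0 ≤ G := hG ▸ Real.log_nonneg hdkm1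
  have hGsplit : G = Real.log d + Real.log k + Real.log m := by
    rw [hG, Real.log_mul (by positivity) (by positivity),
      Real.log_mul (by positivity) (by positivity)]
  have hld : 0 ≤ Real.log d := Real.log_nonneg hd'
  have hlk : 0 ≤ Real.log k := Real.log_nonneg hk'
  have hlm : 0 ≤ Real.log m := Real.log_nonneg hm'
  have hRHS : 0 ≤ 1000 * (d:ℝ) * k * (1 + G) := by positivity
  rcases Nat.eq_zero_or_pos n with rfl | hn
  · simpa using hRHS
  have hn' : (1:ℝ) ≤ n := by exact_mod_cast hn
  obtain ⟨L, hL⟩ : ∃ L : ℝ, L = Real.log 2 := ⟨_, rfl⟩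
  have hL1 : 0.6931471803 < L := hL ▸ Real.log_two_gt_d9
  have hL2 : L < 0.6931471808 := hL ▸ Real.log_two_lt_d9
  have hL0 : (0:ℝ) < L := by linarith
  have hkm1 : (1:ℝ) ≤ (k:ℝ) * m := one_le_mul_real hk' hm'
  have hkmn1 : (1:ℝ) ≤ (k:ℝ) * m * n := one_le_mul_real hkm1 hn'
  -- cast the counting inequality and take logs
  have hcast : ((2:ℝ)) ^ n ≤ ((k:ℝ) * m * n + 1) ^ (k * d + k + 2) := by
    have := (Nat.cast_le (α := ℝ)).2 h
    push_cast at this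
    convert this using 2
  have h1 : (n:ℝ) * L ≤ ((k:ℝ) * d + k + 2) * Real.log ((k:ℝ) * m * n + 1) := by
    have hlog := Real.log_le_log (by positivity) hcast
    rw [Real.log_pow, Real.log_pow] at hlog
    calc (n:ℝ) * L = ((n:ℕ):ℝ) * Real.log 2 := by rw [hL]
      _ ≤ ((k * d + k + 2 : ℕ):ℝ) * Real.log ((k:ℝ) * m * n + 1) := hlog
      _ = ((k:ℝ) * d + k + 2) * Real.log ((k:ℝ) * m * n + 1) := by push_cast; ring
  clear h hcast
  have h2 : Real.log ((k:ℝ) * m * n + 1) ≤ L + Real.log k + Real.log m + Real.log n := by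
    have hle : (k:ℝ) * m * n + 1 ≤ 2 * ((k:ℝ) * m * n) := by linarith
    calc Real.log ((k:ℝ) * m * n + 1) ≤ Real.log (2 * ((k:ℝ) * m * n)) :=
          Real.log_le_log (by positivity) hle
      _ = L + Real.log k + Real.log m + Real.log n := by
          rw [Real.log_mul (by norm_num) (by positivity),
            Real.log_mul (by positivity) (by positivity),
            Real.log_mul (by positivity) (by positivity), hL]
          ring
  obtain ⟨t, hT⟩ : ∃ t : ℝ, t = 16 * (d:ℝ) * k / L := ⟨_, rfl⟩
  have ht0 : 0 < t := by rw [hT]; positivity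
  have h3 : Real.log n ≤ (n:ℝ) * L / (16 * d * k) + Real.log t := by
    have hdiv : Real.log ((n:ℝ) / t) ≤ (n:ℝ) / t - 1 :=
      Real.log_le_sub_one_of_pos (by positivity)
    rw [Real.log_div (by positivity) (by positivity)] at hdiv
    have heq : (n:ℝ) / t = (n:ℝ) * L / (16 * d * k) := by
      rw [hT]; field_simp
    rw [heq] at hdiv
    linarith
  have h4 : Real.log t ≤ 4 + Real.log d + Real.log k := by
    have hle : t ≤ 32 * d * k := by
      rw [hT, div_le_iff₀ hL0]
      have h2L : (1:ℝ) ≤ 2 * L := by linarith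
      have hp := mul_le_mul_of_nonneg_left h2L (show (0:ℝ) ≤ 16*(d:ℝ)*k by positivity)
      linarith [hp]
    calc Real.log t ≤ Real.log (32 * (d:ℝ) * k) := Real.log_le_log ht0 hle
      _ = Real.log 32 + Real.log d + Real.log k := by
          rw [Real.log_mul (by positivity) (by positivity),
            Real.log_mul (by norm_num) (by positivity)]
      _ ≤ 4 + Real.log d + Real.log k := by
          have h32 : Real.log 32 = 5 * L := by
            rw [show (32:ℝ) = 2^5 by norm_num, Real.log_pow, hL]; norm_num
          rw [h32]; linarith
  -- combine everything
  have hdk0 : (0:ℝ) ≤ 4 * ((d:ℝ) * k) := by positivity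
  have hcoef : ((k:ℝ) * d + k + 2) ≤ 4 * ((d:ℝ) * k) := by
    have e1 : (k:ℝ) * 1 ≤ (k:ℝ) * d := mul_le_mul_of_nonneg_left hd' (by linarith)
    linarith [e1, hdk1]
  have hlogpos : 0 ≤ Real.log ((k:ℝ) * m * n + 1) := Real.log_nonneg (by linarith)
  have h5 : (n:ℝ) * L ≤ 4 * ((d:ℝ) * k) * (L + Real.log k + Real.log m +
      ((n:ℝ) * L / (16 * d * k) + (4 + Real.log d + Real.log k))) := by
    have s1 := mul_le_mul_of_nonneg_right hcoef hlogpos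
    have s2 := mul_le_mul_of_nonneg_left h2 hdk0
    have hlog : Real.log n ≤ (n:ℝ) * L / (16 * d * k) + (4 + Real.log d + Real.log k) := by
      linarith
    have s3 := mul_le_mul_of_nonneg_left
      (show L + Real.log k + Real.log m + Real.log n ≤ L + Real.log k + Real.log m +
        ((n:ℝ) * L / (16 * d * k) + (4 + Real.log d + Real.log k)) by linarith) hdk0
    linarith [h1, s1, s2, s3]
  have hsimp : 4 * ((d:ℝ) * k) * ((n:ℝ) * L / (16 * d * k)) = (n:ℝ) * L / 4 := by
    field_simp
    ring
  have hexpand : 4 * ((d:ℝ) * k) * (L + Real.log k + Real.log m +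
      ((n:ℝ) * L / (16 * d * k) + (4 + Real.log d + Real.log k)))
      = 4 * ((d:ℝ) * k) * (L + 4 + Real.log d + 2 * Real.log k + Real.log m)
        + 4 * ((d:ℝ) * k) * ((n:ℝ) * L / (16 * d * k)) := by ring
  have h6 : (3/4) * ((n:ℝ) * L) ≤
      4 * ((d:ℝ) * k) * (L + 4 + Real.log d + 2 * Real.log k + Real.log m) := by
    rw [hexpand, hsimp] at h5
    linarith
  have h7 : L + 4 + Real.log d + 2 * Real.log k + Real.log m ≤ 5 * (1 + G) := by
    rw [hGsplit]; linarith
  have h8 : (3/4) * ((n:ℝ) * L) ≤ 20 * ((d:ℝ) * k * (1 + G)) := by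
    have s4 := mul_le_mul_of_nonneg_left h7 hdk0
    calc (3/4) * ((n:ℝ) * L) ≤ 4 * ((d:ℝ) * k) * (5 * (1 + G)) := by linarith
      _ = 20 * ((d:ℝ) * k * (1 + G)) := by ring
  have hX : (0:ℝ) ≤ (d:ℝ) * k * (1 + G) := by positivity
  have hprod : (n:ℝ) * 0.6931471803 ≤ (n:ℝ) * L :=
    mul_le_mul_of_nonneg_left hL1.le (by linarith)
  have goal' : (n:ℝ) ≤ 1000 * ((d:ℝ) * k * (1 + G)) := by linarith
  linarith [goal']

/-- VC dimension of discrete-Fréchet metric balls on `m`-tuples of points of `ℝ^d`,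
with centers of complexity `k`, is `O(d k log (d k m))`. -/
theorem vc_discrete_frechet_upper :
    ∃ C : ℝ, 0 < C ∧ ∀ d k m : ℕ, 1 ≤ d → 1 ≤ k → 1 ≤ m →
      ∀ Y : Finset (Fin m → EuclideanSpace ℝ (Fin d)),
        Shatters {B | ∃ (q : Fin k → EuclideanSpace ℝ (Fin d)) (r : ℝ), 0 < r ∧
            B = {s | discreteFrechetDist q s ≤ r}} Y →
        (Y.card : ℝ) ≤ C * d * k * (1 + Real.log ((d : ℝ) * k * m)) := by
  refine ⟨1000, by norm_num, ?_⟩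
  intro d k m hd hk hm Y hY
  exact final_arith d k m Y.card hd hk hm (count_bound d k m hd hk hm Y hY)
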